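/- Let n ≥ 5 be an odd integer and let k be an integer with 1 ≤ k ≤ (n-3)/2. Then Σ_{i=1}^{(n-1)/2} e_{2i} · g_{n-2i,n} · ∏_{j=k-i+1}^{(n-1)/2 - i} (q^{2j} - 1)/(q^{2j-2k+2i} - 1) = ((q^{nk} - 1)/(q - 1)) · ∏_{j=k+1}^{(n-1)/2} (q^{2j} - 1)/(q^{2j-2k} - 1) in K, where products are over all integers j in the indicated range (an empty product equals 1), and q^m for m ≤ 0 is interpreted in K using the invertibility of q. -/

import Mathlib

open Finset

/-- The indeterminate `q` in the field `K = RatFunc ℚ`. -/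
noncomputable def q : RatFunc ℚ := RatFunc.X

/-- Gaussian binomial coefficient `[m, r]_x` with integer arguments:
`∏_{i=0}^{r-1} (1 - x^(m-i))/(1 - x^(i+1))` if `0 ≤ r ≤ m`, and `0` otherwise. -/
noncomputable def gauss (x : RatFunc ℚ) (m r : ℤ) : RatFunc ℚ :=
  if 0 ≤ r ∧ r ≤ m then
    ∏ i ∈ Finset.range r.toNat, (1 - x ^ (m - (i : ℤ))) / (1 - x ^ ((i : ℤ) + 1))
  else 0

/-- `e_{2i}`: the E-polynomial of the space of nondegenerate skew forms on `ℂ^{2i}`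
up to scaling: `q^{i(i-1)} (∏_{j=1}^{i} (q^{2j-1} - 1))/(q - 1)`. -/
noncomputable def e (i : ℤ) : RatFunc ℚ :=
  q ^ (i * (i - 1)) * (∏ j ∈ Finset.Icc (1 : ℤ) i, (q ^ (2 * j - 1) - 1)) / (q - 1)

/-! ### Basic facts about `q` -/

lemma q_ne_zero : q ≠ 0 := RatFunc.X_ne_zero

lemma q_pow_nat_ne_one {s : ℕ} (hs : s ≠ 0) : q ^ (s : ℤ) ≠ 1 := by
  intro h
  rw [zpow_natCast] at h
  have h2 : (algebraMap (Polynomial ℚ) (RatFunc ℚ)) (Polynomial.X ^ s) =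
      (algebraMap (Polynomial ℚ) (RatFunc ℚ)) 1 := by
    rw [map_pow, map_one, RatFunc.algebraMap_X]
    exact h
  have h3 := RatFunc.algebraMap_injective ℚ h2
  have := congrArg Polynomial.natDegree h3
  simp [Polynomial.natDegree_X_pow] at this
  exact hs this

lemma q_zpow_ne_one {t : ℤ} (ht : t ≠ 0) : q ^ t ≠ 1 := by
  rcases lt_or_gt_of_ne ht with h | h
  · intro hc
    have h1 : q ^ ((-t).toNat : ℤ) ≠ 1 := q_pow_nat_ne_one (by omega)
    apply h1
    have : ((-t).toNat : ℤ) = -t := by omega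
    rw [this, zpow_neg, hc, inv_one]
  · have h1 : q ^ (t.toNat : ℤ) ≠ 1 := q_pow_nat_ne_one (by omega)
    have : (t.toNat : ℤ) = t := by omega
    rwa [this] at h1

lemma q_sub_ne {t : ℤ} (ht : t ≠ 0) : q ^ t - 1 ≠ 0 :=
  sub_ne_zero.mpr (q_zpow_ne_one ht)

/-! ### Interval product helpers -/

lemma myIoc_consec (f : ℤ → RatFunc ℚ) {a b c : ℤ} (h1 : a ≤ b) (h2 : b ≤ c) :
    (∏ t ∈ Ioc a b, f t) * ∏ t ∈ Ioc b c, f t = ∏ t ∈ Ioc a c, f t := by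
  rw [← Finset.Ioc_union_Ioc_eq_Ioc h1 h2, Finset.prod_union]
  exact Finset.disjoint_left.2 fun x hx h'x =>
    lt_irrefl _ ((Finset.mem_Ioc.1 h'x).1.trans_le (Finset.mem_Ioc.1 hx).2)

lemma Ioc_single (f : ℤ → RatFunc ℚ) (a : ℤ) : ∏ t ∈ Ioc a (a + 1), f t = f (a + 1) := by
  have : Ioc a (a + 1) = {a + 1} := by
    ext x; simp [Finset.mem_Ioc]; omega
  rw [this, Finset.prod_singleton]

lemma range_to_Ioc (f : ℤ → RatFunc ℚ) (c : ℤ) (r : ℕ) :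
    ∏ t ∈ range r, f (c + 1 + t) = ∏ t ∈ Ioc c (c + r), f t := by
  induction r with
  | zero => simp
  | succ r ih =>
      rw [Finset.prod_range_succ, ih, ← myIoc_consec f (by omega : c ≤ c + r)
        (by omega : (c + r : ℤ) ≤ c + (r + 1 : ℕ))]
      have h1 : (c + (r + 1 : ℕ) : ℤ) = (c + r) + 1 := by push_cast; ring
      rw [h1, Ioc_single]
      congr 1; push_cast; ring

lemma range_to_Ioc' (f : ℤ → RatFunc ℚ) (c : ℤ) (r : ℕ) :
    ∏ t ∈ range r, f (c - t) = ∏ t ∈ Ioc (c - r) c, f t := by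
  induction r with
  | zero => simp
  | succ r ih =>
      rw [Finset.prod_range_succ, ih, ← myIoc_consec f
        (by omega : (c - (r + 1 : ℕ) : ℤ) ≤ c - r) (by omega : (c - r : ℤ) ≤ c)]
      have h1 : (c - r : ℤ) = (c - (r + 1 : ℕ)) + 1 := by push_cast; ring
      rw [h1, Ioc_single, ← h1]
      ring

lemma Ioc_shift (f : ℤ → RatFunc ℚ) (a b c : ℤ) :
    ∏ t ∈ Ioc a b, f (t + c) = ∏ t ∈ Ioc (a + c) (b + c), f t := by
  rw [← Finset.map_add_right_Ioc, Finset.prod_map]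
  rfl

lemma parity_split (f : ℤ → RatFunc ℚ) (a : ℤ) (d : ℕ) :
    ∏ t ∈ Ioc (2 * a) (2 * a + 2 * d + 1), f t =
      (∏ j ∈ Ioc a (a + d), f (2 * j)) * ∏ j ∈ Ioc a (a + d + 1), f (2 * j - 1) := by
  induction d with
  | zero =>
      simp only [Nat.cast_zero, mul_zero, add_zero]
      rw [Ioc_single, Finset.Ioc_self, Finset.prod_empty, Ioc_single]
      ring_nf
  | succ d ih =>
      push_cast
      have he : ∏ j ∈ Ioc a (a + (d:ℤ) + 1), f (2 * j)
          = (∏ j ∈ Ioc a (a + (d:ℤ)), f (2 * j)) * f (2 * (a + (d:ℤ) + 1)) := by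
        rw [← myIoc_consec (fun j => f (2 * j)) (by omega : a ≤ a + (d:ℤ))
          (by omega : a + (d:ℤ) ≤ a + (d:ℤ) + 1), Ioc_single]
      have ho : ∏ j ∈ Ioc a (a + (d:ℤ) + 1 + 1), f (2 * j - 1)
          = (∏ j ∈ Ioc a (a + (d:ℤ) + 1), f (2 * j - 1)) * f (2 * (a + (d:ℤ) + 1 + 1) - 1) := by
        rw [← myIoc_consec (fun j => f (2 * j - 1)) (by omega : a ≤ a + (d:ℤ) + 1)
          (by omega : a + (d:ℤ) + 1 ≤ a + (d:ℤ) + 1 + 1), Ioc_single]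
      have e1 : (2 * a + 2 * ((d:ℤ) + 1) + 1 : ℤ) = (2 * a + 2 * d + 1) + 1 + 1 := by ring
      rw [e1, ← myIoc_consec f (by omega) (by omega : (2*a + 2*(d:ℤ) + 1 : ℤ) ≤ (2*a+2*(d:ℤ)+1)+1+1),
        ← myIoc_consec f (by omega : (2*a+2*(d:ℤ)+1 : ℤ) ≤ (2*a+2*(d:ℤ)+1)+1) (by omega), Ioc_single,
        show (2*a+2*(d:ℤ)+1+1 : ℤ) = (2*a+2*(d:ℤ)+1)+1 by ring, Ioc_single, ih,
        show (a + ((d:ℤ) + 1) : ℤ) = a + (d:ℤ) + 1 from by ring, he, ho]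
      have a1 : (2 * (a + (d:ℤ) + 1) : ℤ) = 2*a+2*(d:ℤ)+1+1 := by ring
      have a2 : (2 * (a + (d:ℤ) + 1 + 1) - 1 : ℤ) = 2*a+2*(d:ℤ)+1+1+1 := by ring
      rw [a1, a2]
      ring

/-! ### `W` and `V` products -/

noncomputable def W (a b : ℤ) : RatFunc ℚ := ∏ j ∈ Ioc a b, (q ^ (2 * j) - 1)
noncomputable def V (a b : ℤ) : RatFunc ℚ := ∏ j ∈ Ioc a b, (q ^ (2 * j - 1) - 1)

lemma W_ne {a b : ℤ} (h : 0 ≤ a) : W a b ≠ 0 :=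
  Finset.prod_ne_zero_iff.mpr fun j hj => q_sub_ne (by have := (Finset.mem_Ioc.1 hj).1; omega)

lemma V_ne {a b : ℤ} : V a b ≠ 0 :=
  Finset.prod_ne_zero_iff.mpr fun j _ => q_sub_ne (by omega)

lemma W_merge {a b c : ℤ} (h1 : a ≤ b) (h2 : b ≤ c) : W a b * W b c = W a c :=
  myIoc_consec _ h1 h2

lemma V_merge {a b c : ℤ} (h1 : a ≤ b) (h2 : b ≤ c) : V a b * V b c = V a c :=
  myIoc_consec _ h1 h2

/-! ### q-binomial coefficients and the Newton expansion -/

noncomputable def BN (a b : ℕ) : RatFunc ℚ :=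
  (∏ s ∈ range b, (q ^ (2 * ((a:ℤ) - s)) - 1)) / ∏ j ∈ range b, (q ^ (2 * ((j:ℤ) + 1)) - 1)

lemma D_ne (b : ℕ) : (∏ j ∈ range b, (q ^ (2 * ((j:ℤ) + 1)) - 1)) ≠ 0 :=
  Finset.prod_ne_zero_iff.mpr fun j _ => q_sub_ne (by omega)

lemma BN_zero (a : ℕ) : BN a 0 = 1 := by simp [BN]

lemma BN_top (a : ℕ) : BN a (a + 1) = 0 := by
  rw [BN, div_eq_zero_iff]
  left
  exact Finset.prod_eq_zero (Finset.self_mem_range_succ a) (by simp)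

lemma pascal (a b : ℕ) :
    BN (a + 1) (b + 1) = q ^ (2 * ((b:ℤ) + 1)) * BN a (b + 1) + BN a b := by
  have hN1 : (∏ s ∈ range (b+1), (q ^ (2 * ((((a+1):ℕ):ℤ) - s)) - 1))
      = (q ^ (2 * ((a:ℤ) + 1)) - 1) * ∏ s ∈ range b, (q ^ (2 * ((a:ℤ) - s)) - 1) := by
    rw [Finset.prod_range_succ']
    simp only [Nat.cast_zero, sub_zero, Nat.cast_add, Nat.cast_one]
    rw [mul_comm]
    congr 1
    apply Finset.prod_congr rfl
    intro s _
    congr 2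
    push_cast; ring
  have hN2 : (∏ s ∈ range (b+1), (q ^ (2 * ((a:ℤ) - s)) - 1))
      = (∏ s ∈ range b, (q ^ (2 * ((a:ℤ) - s)) - 1)) * (q ^ (2 * ((a:ℤ) - b)) - 1) :=
    Finset.prod_range_succ _ _
  have hD2 : (∏ j ∈ range (b+1), (q ^ (2 * ((j:ℤ) + 1)) - 1))
      = (∏ j ∈ range b, (q ^ (2 * ((j:ℤ) + 1)) - 1)) * (q ^ (2 * ((b:ℤ) + 1)) - 1) :=
    Finset.prod_range_succ _ _
  have hbne : (q ^ (2 * ((b:ℤ) + 1)) - 1) ≠ 0 := q_sub_ne (by omega)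
  have key : q ^ (2 * ((b:ℤ) + 1)) * q ^ (2 * ((a:ℤ) - b)) = q ^ (2 * ((a:ℤ) + 1)) := by
    rw [← zpow_add₀ q_ne_zero]; congr 1; ring
  rw [BN, BN, BN, hN1, hN2, hD2]
  set N := ∏ s ∈ range b, (q ^ (2 * ((a:ℤ) - s)) - 1) with hN
  set D := ∏ j ∈ range b, (q ^ (2 * ((j:ℤ) + 1)) - 1) with hD
  have hDne : D ≠ 0 := D_ne b
  have hnum : (q ^ (2 * ((a:ℤ) + 1)) - 1) * N
      = q ^ (2 * ((b:ℤ) + 1)) * (N * (q ^ (2 * ((a:ℤ) - b)) - 1)) + N * (q ^ (2 * ((b:ℤ) + 1)) - 1) := by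
    linear_combination (-N) * key
  rw [hnum, add_div, mul_div_assoc, mul_div_mul_right _ _ hbne]

lemma newton (y : RatFunc ℚ) (k : ℕ) :
    ∑ i ∈ range (k + 1), BN k i * ∏ s ∈ range i, (y - q ^ (2 * (s:ℤ))) = y ^ k := by
  induction k with
  | zero => simp [BN_zero]
  | succ k ih =>
      have hstep : ∀ i : ℕ, y * ∏ s ∈ range i, (y - q ^ (2 * (s:ℤ)))
          = (∏ s ∈ range (i+1), (y - q ^ (2 * (s:ℤ))))
            + q ^ (2 * (i:ℤ)) * ∏ s ∈ range i, (y - q ^ (2 * (s:ℤ))) := by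
        intro i
        rw [Finset.prod_range_succ]
        ring
      rw [Finset.sum_range_succ' (fun i => BN (k+1) i * ∏ s ∈ range i, (y - q ^ (2 * (s:ℤ))))]
      simp only [pascal, BN_zero, Finset.range_zero, Finset.prod_empty, mul_one, add_mul]
      rw [Finset.sum_add_distrib]
      have h1 : (∑ i ∈ range (k+1), q ^ (2 * ((i:ℤ) + 1)) * BN k (i+1) *
            ∏ s ∈ range (i+1), (y - q ^ (2 * (s:ℤ)))) + 1
          = ∑ i ∈ range (k+2), q ^ (2 * (i:ℤ)) * BN k i *
            ∏ s ∈ range i, (y - q ^ (2 * (s:ℤ))) := by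
        rw [Finset.sum_range_succ' (fun i => q ^ (2 * (i:ℤ)) * BN k i *
          ∏ s ∈ range i, (y - q ^ (2 * (s:ℤ))))]
        simp only [Nat.cast_zero, mul_zero, zpow_zero, BN_zero, Finset.range_zero,
          Finset.prod_empty, mul_one, one_mul]
        exact congrArg₂ (· + ·)
          (Finset.sum_congr rfl fun i _ => by push_cast; ring) rfl
      have h2 : ∑ i ∈ range (k+2), q ^ (2 * (i:ℤ)) * BN k i *
            ∏ s ∈ range i, (y - q ^ (2 * (s:ℤ)))
          = ∑ i ∈ range (k+1), q ^ (2 * (i:ℤ)) * BN k i *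
            ∏ s ∈ range i, (y - q ^ (2 * (s:ℤ))) := by
        rw [Finset.sum_range_succ, BN_top]
        ring
      have goal2 : (∑ i ∈ range (k+1), q ^ (2 * ((i:ℤ)+1)) * BN k (i+1) *
            ∏ s ∈ range (i+1), (y - q ^ (2 * (s:ℤ))))
          + (∑ i ∈ range (k+1), BN k i * ∏ s ∈ range (i+1), (y - q ^ (2 * (s:ℤ)))) + 1
          = y ^ (k+1) := by
        rw [add_right_comm, h1, h2, ← Finset.sum_add_distrib]
        have : ∀ i ∈ range (k+1), q ^ (2 * (i:ℤ)) * BN k i * ∏ s ∈ range i, (y - q ^ (2 * (s:ℤ)))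
            + BN k i * ∏ s ∈ range (i+1), (y - q ^ (2 * (s:ℤ)))
            = y * (BN k i * ∏ s ∈ range i, (y - q ^ (2 * (s:ℤ)))) := by
          intro i _
          rw [show y * (BN k i * ∏ s ∈ range i, (y - q ^ (2 * (s:ℤ))))
            = BN k i * (y * ∏ s ∈ range i, (y - q ^ (2 * (s:ℤ)))) from by ring, hstep i]
          ring
        rw [Finset.sum_congr rfl this, ← Finset.mul_sum, ih]
        ring
      rw [← goal2]

/-! ### expressing the ingredients via `W`, `V` -/

lemma Icc_one_eq_Ioc (i : ℤ) : Finset.Icc (1 : ℤ) i = Finset.Ioc 0 i := by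
  ext x; simp [Finset.mem_Icc, Finset.mem_Ioc]; omega

lemma e_eq (i : ℤ) : e i = q ^ (i * (i - 1)) * V 0 i / (q - 1) := by
  rw [e, Icc_one_eq_Ioc, V]

lemma gauss_eq {m i : ℤ} (hm : 2 ≤ m) (hi1 : 1 ≤ i) (hi2 : i ≤ m) :
    gauss q (2*m+1) (2*m+1 - 2*i) = (W i m * V i (m+1)) / (W 0 (m-i) * V 0 (m-i+1)) := by
  have hr : ((2*m+1 - 2*i).toNat : ℤ) = 2*m+1-2*i := by omega
  rw [gauss, if_pos ⟨by omega, by omega⟩]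
  have hfac : ∀ t ∈ range (2*m+1 - 2*i).toNat,
      (1 - q ^ (2*m+1 - (t:ℤ))) / (1 - q ^ ((t:ℤ) + 1))
        = (q ^ (2*m+1 - (t:ℤ)) - 1) / (q ^ ((t:ℤ) + 1) - 1) := by
    intro t _
    rw [show (1 - q ^ (2*m+1 - (t:ℤ))) = -(q ^ (2*m+1 - (t:ℤ)) - 1) from by ring,
      show (1 - q ^ ((t:ℤ) + 1)) = -(q ^ ((t:ℤ) + 1) - 1) from by ring, neg_div_neg_eq]
  rw [Finset.prod_congr rfl hfac, Finset.prod_div_distrib]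
  have hnum : ∏ t ∈ range (2*m+1 - 2*i).toNat, (q ^ (2*m+1 - (t:ℤ)) - 1)
      = W i m * V i (m+1) := by
    rw [range_to_Ioc' (fun t => q ^ t - 1) (2*m+1) _, hr]
    have hd : (((m - i).toNat : ℤ)) = m - i := by omega
    have he1 : (2*m+1 - (2*m+1-2*i) : ℤ) = 2 * i := by ring
    have he2 : (2*m+1 : ℤ) = 2 * i + 2 * ((m-i).toNat : ℤ) + 1 := by omega
    rw [he1, he2, parity_split (fun t => q ^ t - 1) i ((m-i).toNat)]
    rw [show (i + ((m-i).toNat : ℤ)) = m from by omega, W, V,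
      show (m + 1 : ℤ) = m + 1 from rfl]
  have hden : ∏ t ∈ range (2*m+1 - 2*i).toNat, (q ^ ((t:ℤ) + 1) - 1)
      = W 0 (m-i) * V 0 (m-i+1) := by
    have : ∀ t ∈ range (2*m+1 - 2*i).toNat,
        ((q ^ ((t:ℤ) + 1) - 1) : RatFunc ℚ) = q ^ ((0:ℤ) + 1 + (t:ℤ)) - 1 := by
      intro t _; rw [show ((0:ℤ) + 1 + (t:ℤ)) = (t:ℤ) + 1 from by ring]
    rw [Finset.prod_congr rfl this, range_to_Ioc (fun t => q ^ t - 1) 0 _]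
    have hd : (((m-i).toNat : ℤ)) = m - i := by omega
    have ps := parity_split (fun t => q ^ t - 1) 0 ((m-i).toNat)
    rw [hd] at ps
    norm_num at ps
    have he2 : ((0:ℤ) + ((2*m+1 - 2*i).toNat : ℤ)) = 2 * (m - i) + 1 := by omega
    rw [he2, ps, W, V]
  rw [hnum, hden]

lemma q_one_ne : q - 1 ≠ 0 := by
  have := q_sub_ne (t := 1) (by omega)
  simpa using this

lemma inner_eq {m k i : ℤ} (hi2 : i ≤ k) (hk2 : k ≤ m - 1) :
    ∏ j ∈ Finset.Icc (k-i+1) (m-i), (q ^ (2*j) - 1) / (q ^ (2*j-2*k+2*i) - 1)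
      = W (k-i) (m-i) / W 0 (m-k) := by
  have hIcc : Finset.Icc (k-i+1) (m-i) = Finset.Ioc (k-i) (m-i) := by
    ext x; simp [Finset.mem_Icc, Finset.mem_Ioc]
  rw [hIcc, Finset.prod_div_distrib, W]
  congr 1
  have hs := Ioc_shift (fun j => q ^ (2*j-2*k+2*i) - 1) 0 (m-k) (k-i)
  rw [show ((0:ℤ) + (k-i)) = k - i from by ring, show ((m:ℤ)-k + (k-i)) = m - i from by ring] at hs
  rw [← hs, W]
  apply Finset.prod_congr rfl
  intro t _
  rw [show (2*(t + (k-i)) - 2*k + 2*i : ℤ) = 2 * t from by ring]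

lemma core_eq {m k i : ℤ} (hm : 2 ≤ m) (hk1 : 1 ≤ k) (hk2 : k ≤ m - 1) (hi1 : 1 ≤ i)
    (hi2 : i ≤ k) :
    V 0 i * W i m * V i (m+1) * W (k-i) (m-i) * W 0 i
      = W (k-i) k * V (m-i+1) (m+1) * W k m * (W 0 (m-i) * V 0 (m-i+1)) := by
  calc V 0 i * W i m * V i (m+1) * W (k-i) (m-i) * W 0 i
      = (V 0 i * V i (m+1)) * ((W 0 i * W i m) * W (k-i) (m-i)) := by ring
    _ = V 0 (m+1) * (W 0 m * W (k-i) (m-i)) := by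
        rw [V_merge (by omega) (by omega), W_merge (by omega) (by omega)]
    _ = V 0 (m+1) * ((W 0 (k-i) * W (k-i) m) * W (k-i) (m-i)) := by
        rw [W_merge (by omega : (0:ℤ) ≤ k - i) (by omega : k - i ≤ m)]
    _ = V 0 (m+1) * (W (k-i) m * (W 0 (k-i) * W (k-i) (m-i))) := by ring
    _ = V 0 (m+1) * (W (k-i) m * W 0 (m-i)) := by
        rw [W_merge (by omega : (0:ℤ) ≤ k - i) (by omega : k - i ≤ m - i)]
    _ = V 0 (m+1) * ((W (k-i) k * W k m) * W 0 (m-i)) := by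
        rw [W_merge (by omega : k - i ≤ k) (by omega : k ≤ m)]
    _ = (V 0 (m-i+1) * V (m-i+1) (m+1)) * ((W (k-i) k * W k m) * W 0 (m-i)) := by
        rw [V_merge (by omega : (0:ℤ) ≤ m - i + 1) (by omega : m - i + 1 ≤ m + 1)]
    _ = W (k-i) k * V (m-i+1) (m+1) * W k m * (W 0 (m-i) * V 0 (m-i+1)) := by ring

lemma term_eq {m k i : ℤ} (hm : 2 ≤ m) (hk1 : 1 ≤ k) (hk2 : k ≤ m - 1) (hi1 : 1 ≤ i)
    (hi2 : i ≤ k) :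
    e i * gauss q (2*m+1) (2*m+1 - 2*i) *
        ∏ j ∈ Finset.Icc (k-i+1) (m-i), (q ^ (2*j) - 1) / (q ^ (2*j-2*k+2*i) - 1)
      = (W (k-i) k / W 0 i) * (q ^ (i*(i-1)) * V (m-i+1) (m+1)) *
          (W k m / (W 0 (m-k) * (q-1))) := by
  rw [e_eq, gauss_eq hm hi1 (by omega), inner_eq hi2 hk2]
  have core := core_eq hm hk1 hk2 hi1 hi2
  have h1 : W 0 (m-i) ≠ 0 := W_ne (by omega)
  have h2 : (V 0 (m-i+1) : RatFunc ℚ) ≠ 0 := V_ne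
  have h3 : W 0 (m-k) ≠ 0 := W_ne (by omega)
  have h4 : W 0 i ≠ 0 := W_ne (by omega)
  have h5 : q - 1 ≠ 0 := q_one_ne
  field_simp
  linear_combination (q ^ (i*(i-1))) * core

lemma mySum_consec (f : ℤ → RatFunc ℚ) {a b c : ℤ} (h1 : a ≤ b) (h2 : b ≤ c) :
    (∑ t ∈ Ioc a b, f t) + ∑ t ∈ Ioc b c, f t = ∑ t ∈ Ioc a c, f t := by
  rw [← Finset.Ioc_union_Ioc_eq_Ioc h1 h2, Finset.sum_union]
  exact Finset.disjoint_left.2 fun x hx h'x =>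
    lt_irrefl _ ((Finset.mem_Ioc.1 h'x).1.trans_le (Finset.mem_Ioc.1 hx).2)

lemma prod_q_zpow (g : ℕ → ℤ) (r : ℕ) :
    ∏ s ∈ range r, q ^ (g s) = q ^ (∑ s ∈ range r, g s) := by
  induction r with
  | zero => simp
  | succ r ih => rw [Finset.prod_range_succ, Finset.sum_range_succ, ih, ← zpow_add₀ q_ne_zero]

lemma sum_two_s (r : ℕ) : (∑ s ∈ range r, 2 * (s:ℤ)) = (r:ℤ) * ((r:ℤ) - 1) := by
  induction r with
  | zero => simp
  | succ r ih => rw [Finset.sum_range_succ, ih]; push_cast; ring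

lemma BN_bridge {k i : ℤ} (hi0 : 0 ≤ i) (hik : i ≤ k) :
    BN k.toNat i.toNat = W (k-i) k / W 0 i := by
  have hk : ((k.toNat : ℕ) : ℤ) = k := by omega
  have hi : ((i.toNat : ℕ) : ℤ) = i := by omega
  rw [BN]
  congr 1
  · have : ∀ s ∈ range i.toNat, (q ^ (2 * ((k.toNat:ℤ) - s)) - 1)
        = (fun t : ℤ => q ^ (2 * t) - 1) (k - (s:ℤ)) := by
      intro s _; rw [hk]
    rw [Finset.prod_congr rfl this, range_to_Ioc' (fun t => q ^ (2*t) - 1) k i.toNat, hi, W]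
  · have : ∀ j ∈ range i.toNat, (q ^ (2 * ((j:ℤ) + 1)) - 1)
        = (fun t : ℤ => q ^ (2 * t) - 1) (0 + 1 + (j:ℤ)) := by
      intro j _; rw [show ((0:ℤ) + 1 + (j:ℤ)) = (j:ℤ) + 1 from by ring]
    rw [Finset.prod_congr rfl this, range_to_Ioc (fun t => q ^ (2*t) - 1) 0 i.toNat,
      show ((0:ℤ) + (i.toNat:ℤ)) = i from by omega, W]

lemma P_bridge {m i : ℤ} (hi0 : 0 ≤ i) (him : i ≤ m) :
    ∏ s ∈ range i.toNat, (q ^ (2*m+1 : ℤ) - q ^ (2 * (s:ℤ)))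
      = q ^ (i*(i-1)) * V (m-i+1) (m+1) := by
  have hi : ((i.toNat : ℕ) : ℤ) = i := by omega
  have hfac : ∀ s ∈ range i.toNat, (q ^ (2*m+1 : ℤ) - q ^ (2 * (s:ℤ)))
      = q ^ (2 * (s:ℤ)) * (q ^ (2*m+1 - 2*(s:ℤ)) - 1) := by
    intro s _
    rw [mul_sub, mul_one, ← zpow_add₀ q_ne_zero,
      show (2*(s:ℤ) + (2*m+1 - 2*(s:ℤ))) = 2*m+1 from by ring]
  rw [Finset.prod_congr rfl hfac, Finset.prod_mul_distrib, prod_q_zpow, sum_two_s, hi]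
  congr 1
  have : ∀ s ∈ range i.toNat, (q ^ (2*m+1 - 2*(s:ℤ)) - 1)
      = (fun t : ℤ => q ^ (2*t - 1) - 1) ((m+1) - (s:ℤ)) := by
    intro s _
    show _ = q ^ (2*((m+1) - (s:ℤ)) - 1) - 1
    rw [show (2*((m+1) - (s:ℤ)) - 1) = 2*m+1 - 2*(s:ℤ) from by ring]
  rw [Finset.prod_congr rfl this, range_to_Ioc' (fun t => q ^ (2*t - 1) - 1) (m+1) i.toNat,
    hi, show ((m:ℤ) + 1 - i) = m - i + 1 from by ring, V]

lemma Icc_map (k : ℤ) (hk : 0 ≤ k) :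
    Finset.Icc (1:ℤ) k = Finset.map ⟨fun i : ℕ => (i:ℤ)+1, show Function.Injective (fun i : ℕ => (i:ℤ)+1) from by intro a b h; simpa using h⟩
      (range k.toNat) := by
  ext x
  simp only [Finset.mem_Icc, Finset.mem_map, Finset.mem_range, Function.Embedding.coeFn_mk]
  constructor
  · intro h; exact ⟨(x-1).toNat, by omega, by show ((x-1).toNat : ℤ) + 1 = x; omega⟩
  · rintro ⟨a, ha, rfl⟩; show 1 ≤ (a:ℤ) + 1 ∧ (a:ℤ) + 1 ≤ k; omega

lemma rhs_eq {m k : ℤ} (hk2 : k ≤ m - 1) :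
    ∏ j ∈ Finset.Icc (k+1) m, (q ^ (2*j) - 1) / (q ^ (2*j-2*k) - 1)
      = W k m / W 0 (m-k) := by
  have hIcc : Finset.Icc (k+1) m = Finset.Ioc k m := by
    ext x; simp [Finset.mem_Icc, Finset.mem_Ioc]
  rw [hIcc, Finset.prod_div_distrib, W]
  congr 1
  have hs := Ioc_shift (fun j => q ^ (2*j-2*k) - 1) 0 (m-k) k
  rw [show ((0:ℤ) + k) = k from by ring, show ((m:ℤ)-k + k) = m from by ring] at hs
  rw [← hs, W]
  apply Finset.prod_congr rfl
  intro t _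
  rw [show (2*(t + k) - 2*k : ℤ) = 2 * t from by ring]

theorem stmt4 (n k : ℤ) (hn : 5 ≤ n) (hodd : Odd n) (hk1 : 1 ≤ k) (hk2 : k ≤ (n - 3) / 2) :
    ∑ i ∈ Finset.Icc (1 : ℤ) ((n - 1) / 2),
      e i * gauss q n (n - 2 * i) *
        ∏ j ∈ Finset.Icc (k - i + 1) ((n - 1) / 2 - i),
          (q ^ (2 * j) - 1) / (q ^ (2 * j - 2 * k + 2 * i) - 1) =
    ((q ^ (n * k) - 1) / (q - 1)) *
      ∏ j ∈ Finset.Icc (k + 1) ((n - 1) / 2),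
        (q ^ (2 * j) - 1) / (q ^ (2 * j - 2 * k) - 1) := by
  obtain ⟨mm, hmm⟩ := hodd
  have hn2 : n = 2 * mm + 1 := by omega
  subst hn2
  have hm : 2 ≤ mm := by omega
  have hk2' : k ≤ mm - 1 := by omega
  rw [show (2*mm+1 - 1)/2 = mm from by omega]
  rw [Icc_one_eq_Ioc mm]
  rw [← mySum_consec _ (by omega : (0:ℤ) ≤ k) (by omega : k ≤ mm)]
  have hzero : (∑ i ∈ Ioc k mm,
      e i * gauss q (2*mm+1) (2*mm+1 - 2*i) *
        ∏ j ∈ Finset.Icc (k - i + 1) (mm - i),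
          (q ^ (2 * j) - 1) / (q ^ (2 * j - 2 * k + 2 * i) - 1)) = 0 := by
    apply Finset.sum_eq_zero
    intro i hi
    rw [Finset.mem_Ioc] at hi
    have h0mem : (0:ℤ) ∈ Finset.Icc (k - i + 1) (mm - i) := by
      rw [Finset.mem_Icc]; omega
    have hval : (q ^ (2 * (0:ℤ)) - 1) / (q ^ (2 * (0:ℤ) - 2 * k + 2 * i) - 1) = 0 := by
      norm_num
    rw [Finset.prod_eq_zero h0mem hval, mul_zero]
  rw [hzero, add_zero]
  rw [show Finset.Ioc (0:ℤ) k = Finset.Icc 1 k from (Icc_one_eq_Ioc k).symm,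
    Icc_map k (by omega), Finset.sum_map]
  simp only [Function.Embedding.coeFn_mk]
  have hterm : ∀ i' ∈ range k.toNat,
      e ((i':ℤ)+1) * gauss q (2*mm+1) (2*mm+1 - 2*((i':ℤ)+1)) *
        ∏ j ∈ Finset.Icc (k - ((i':ℤ)+1) + 1) (mm - ((i':ℤ)+1)),
          (q ^ (2 * j) - 1) / (q ^ (2 * j - 2 * k + 2 * ((i':ℤ)+1)) - 1)
      = BN k.toNat (i'+1) * (∏ s ∈ range (i'+1), (q ^ (2*mm+1 : ℤ) - q ^ (2 * (s:ℤ))))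
          * (W k mm / (W 0 (mm-k) * (q-1))) := by
    intro i' hi'
    rw [Finset.mem_range] at hi'
    have hik : ((i':ℤ)+1) ≤ k := by omega
    rw [term_eq hm hk1 hk2' (by omega) hik,
      show (i'+1 : ℕ) = ((i':ℤ)+1).toNat from by omega,
      BN_bridge (by omega : (0:ℤ) ≤ (i':ℤ)+1) hik,
      P_bridge (by omega : (0:ℤ) ≤ (i':ℤ)+1) (by omega : ((i':ℤ)+1) ≤ mm)]
  rw [Finset.sum_congr rfl hterm, ← Finset.sum_mul]
  have hy : (q ^ (2*mm+1 : ℤ)) ^ (k.toNat) = q ^ ((2*mm+1) * k) := by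
    rw [← zpow_natCast (q ^ (2*mm+1 : ℤ)) k.toNat, ← zpow_mul]
    congr 1
    have : ((k.toNat : ℕ) : ℤ) = k := by omega
    rw [this]
  have hnewt := newton (q ^ (2*mm+1 : ℤ)) k.toNat
  rw [Finset.sum_range_succ'
    (fun i => BN k.toNat i * ∏ s ∈ range i, (q ^ (2*mm+1:ℤ) - q ^ (2 * (s:ℤ))))] at hnewt
  simp only [BN_zero, Finset.range_zero, Finset.prod_empty, mul_one, one_mul] at hnewt
  have hsum : (∑ i' ∈ range k.toNat, BN k.toNat (i'+1) *
      ∏ s ∈ range (i'+1), (q ^ (2*mm+1:ℤ) - q ^ (2 * (s:ℤ)))) = q ^ ((2*mm+1)*k) - 1 := by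
    rw [← hy, ← hnewt]
    ring
  rw [hsum, rhs_eq hk2']
  have h3 : W 0 (mm-k) ≠ 0 := W_ne (by omega)
  have h5 : q - 1 ≠ 0 := q_one_ne
  field_simp
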